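/- The subset Σ of S⁶ given by Σ = {x ∈ S⁶ : x₁ ≥ 0, x₁² + x₂² + x₃² = 1/2, x₄² + x₅² = 1/2} ∪ {x ∈ S⁶ : x₁ < 0, x₁² + x₄² + x₅² = 1/2, x₂² + x₃² = 1/2} is homeomorphic to the 3-sphere S³. -/

import Mathlib

set_option maxHeartbeats 1600000

/- STATEMENT 3: The subset Σ of S⁶ given by
   Σ = {x ∈ S⁶ : x₁ ≥ 0, x₁²+x₂²+x₃² = 1/2, x₄²+x₅² = 1/2}
     ∪ {x ∈ S⁶ : x₁ < 0, x₁²+x₄²+x₅² = 1/2, x₂²+x₃² = 1/2}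
   is homeomorphic to the 3-sphere S³. -/

noncomputable section

abbrev E (n : ℕ) : Type := EuclideanSpace ℝ (Fin n)

/-- The sphere `Σ = σ(S³) ⊂ S⁶` of the paper. -/
def SigmaSet : Set (E 7) :=
  {x | x ∈ Metric.sphere (0 : E 7) 1 ∧ 0 ≤ x 0 ∧
       x 0 ^ 2 + x 1 ^ 2 + x 2 ^ 2 = 1 / 2 ∧ x 3 ^ 2 + x 4 ^ 2 = 1 / 2} ∪
  {x | x ∈ Metric.sphere (0 : E 7) 1 ∧ x 0 < 0 ∧
       x 0 ^ 2 + x 3 ^ 2 + x 4 ^ 2 = 1 / 2 ∧ x 1 ^ 2 + x 2 ^ 2 = 1 / 2}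

namespace Stmt3

lemma mem_sph {n : ℕ} (x : E n) :
    x ∈ Metric.sphere (0 : E n) 1 ↔ ∑ i, x i ^ 2 = 1 := by
  rw [mem_sphere_iff_norm, sub_zero, EuclideanSpace.norm_eq]
  rw [show (1:ℝ) = Real.sqrt 1 from Real.sqrt_one.symm]
  rw [Real.sqrt_inj (by positivity) (by norm_num)]
  simp [Real.norm_eq_abs, sq_abs]

/-- Forward map `S³ → Σ`. -/
def fFun (x : E 4) : E 7 :=
  (WithLp.equiv 2 _).symm <|
  if x 0 ^ 2 + x 1 ^ 2 ≤ 1 / 2 then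
    ![-Real.sqrt (1/2 - (x 0 ^ 2 + x 1 ^ 2)),
      x 2 / Real.sqrt (2 * (1 - min (x 0 ^ 2 + x 1 ^ 2) (1/2))),
      x 3 / Real.sqrt (2 * (1 - min (x 0 ^ 2 + x 1 ^ 2) (1/2))),
      x 0, x 1, 0, 0]
  else
    ![Real.sqrt (x 0 ^ 2 + x 1 ^ 2 - 1/2),
      x 2, x 3,
      x 0 / Real.sqrt (2 * max (x 0 ^ 2 + x 1 ^ 2) (1/2)),
      x 1 / Real.sqrt (2 * max (x 0 ^ 2 + x 1 ^ 2) (1/2)), 0, 0]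

/-- Inverse map `Σ → S³`. -/
def gFun (x : E 7) : E 4 :=
  (WithLp.equiv 2 _).symm <|
  if 0 ≤ x 0 then
    ![Real.sqrt (2 * x 0 ^ 2 + 1) * x 3, Real.sqrt (2 * x 0 ^ 2 + 1) * x 4, x 1, x 2]
  else
    ![x 3, x 4, Real.sqrt (2 * x 0 ^ 2 + 1) * x 1, Real.sqrt (2 * x 0 ^ 2 + 1) * x 2]

lemma contCons {α : Type*} [TopologicalSpace α] {n : ℕ} {f : α → ℝ} {g : α → Fin n → ℝ}
    (hf : Continuous f) (hg : Continuous g) :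
    Continuous fun x => Matrix.vecCons (f x) (g x) := by
  refine continuous_pi fun i => ?_
  refine Fin.cases ?_ (fun j => ?_) i
  · simpa using hf
  · simpa [Function.comp_def] using (continuous_apply j).comp hg

lemma contEmpty {α : Type*} [TopologicalSpace α] :
    Continuous fun _ : α => (![] : Fin 0 → ℝ) := continuous_const

lemma cont_coord {n : ℕ} (i : Fin n) : Continuous fun x : E n => x i :=
  (EuclideanSpace.proj (𝕜 := ℝ) i).continuous

lemma fFun_continuous : Continuous fFun := by
  apply (PiLp.continuous_toLp 2 (fun _ : Fin 7 => ℝ)).comp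
  have h0 := cont_coord (n := 4) 0
  have h1 := cont_coord (n := 4) 1
  have h2 := cont_coord (n := 4) 2
  have h3 := cont_coord (n := 4) 3
  have hρ : Continuous fun x : E 4 => x 0 ^ 2 + x 1 ^ 2 :=
    ((h0.pow 2).add (h1.pow 2))
  have hd1 : Continuous fun x : E 4 =>
      Real.sqrt (2 * (1 - min (x 0 ^ 2 + x 1 ^ 2) (1/2))) :=
    Real.continuous_sqrt.comp
      (continuous_const.mul (continuous_const.sub (hρ.min continuous_const)))
  have hd1ne : ∀ x : E 4,
      Real.sqrt (2 * (1 - min (x 0 ^ 2 + x 1 ^ 2) (1/2))) ≠ 0 := by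
    intro x
    have h := min_le_right (x 0 ^ 2 + x 1 ^ 2) (1/2:ℝ)
    have : (1:ℝ) ≤ 2 * (1 - min (x 0 ^ 2 + x 1 ^ 2) (1/2)) := by nlinarith
    positivity
  have hd2 : Continuous fun x : E 4 =>
      Real.sqrt (2 * max (x 0 ^ 2 + x 1 ^ 2) (1/2)) :=
    Real.continuous_sqrt.comp (continuous_const.mul (hρ.max continuous_const))
  have hd2ne : ∀ x : E 4, Real.sqrt (2 * max (x 0 ^ 2 + x 1 ^ 2) (1/2)) ≠ 0 := by
    intro x
    have h := le_max_right (x 0 ^ 2 + x 1 ^ 2) (1/2:ℝ)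
    have : (1:ℝ) ≤ 2 * max (x 0 ^ 2 + x 1 ^ 2) (1/2) := by nlinarith
    positivity
  apply Continuous.if_le
  · exact contCons (Real.continuous_sqrt.comp (continuous_const.sub hρ)).neg
      (contCons (h2.div hd1 hd1ne) (contCons (h3.div hd1 hd1ne)
        (contCons h0 (contCons h1 (contCons continuous_const
          (contCons continuous_const contEmpty))))))
  · exact contCons (Real.continuous_sqrt.comp (hρ.sub continuous_const))
      (contCons h2 (contCons h3 (contCons (h0.div hd2 hd2ne)
        (contCons (h1.div hd2 hd2ne) (contCons continuous_const
          (contCons continuous_const contEmpty))))))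
  · exact hρ
  · exact continuous_const
  · intro x hx
    rw [hx]
    norm_num [Real.sqrt_one, Real.sqrt_zero]

lemma gFun_continuous : Continuous gFun := by
  apply (PiLp.continuous_toLp 2 (fun _ : Fin 4 => ℝ)).comp
  have h0 := cont_coord (n := 7) 0
  have h1 := cont_coord (n := 7) 1
  have h2 := cont_coord (n := 7) 2
  have h3 := cont_coord (n := 7) 3
  have h4 := cont_coord (n := 7) 4
  have hs : Continuous fun x : E 7 => Real.sqrt (2 * x 0 ^ 2 + 1) :=
    Real.continuous_sqrt.comp ((continuous_const.mul (h0.pow 2)).add continuous_const)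
  apply Continuous.if_le
  · exact contCons (hs.mul h3) (contCons (hs.mul h4)
      (contCons h1 (contCons h2 contEmpty)))
  · exact contCons h3 (contCons h4
      (contCons (hs.mul h1) (contCons (hs.mul h2) contEmpty)))
  · exact continuous_const
  · exact h0
  · intro x hx
    rw [← hx]
    norm_num [Real.sqrt_one]

lemma fFun_left (x : E 4) (h : x 0 ^ 2 + x 1 ^ 2 ≤ 1/2) :
    fFun x 0 = -Real.sqrt (1/2 - (x 0 ^ 2 + x 1 ^ 2)) ∧
    fFun x 1 = x 2 / Real.sqrt (2 * (1 - (x 0 ^ 2 + x 1 ^ 2))) ∧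
    fFun x 2 = x 3 / Real.sqrt (2 * (1 - (x 0 ^ 2 + x 1 ^ 2))) ∧
    fFun x 3 = x 0 ∧ fFun x 4 = x 1 ∧ fFun x 5 = 0 ∧ fFun x 6 = 0 := by
  unfold fFun
  rw [if_pos h, min_eq_left h]
  exact ⟨rfl, rfl, rfl, rfl, rfl, rfl, rfl⟩

lemma fFun_right (x : E 4) (h : ¬ (x 0 ^ 2 + x 1 ^ 2 ≤ 1/2)) :
    fFun x 0 = Real.sqrt (x 0 ^ 2 + x 1 ^ 2 - 1/2) ∧
    fFun x 1 = x 2 ∧ fFun x 2 = x 3 ∧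
    fFun x 3 = x 0 / Real.sqrt (2 * (x 0 ^ 2 + x 1 ^ 2)) ∧
    fFun x 4 = x 1 / Real.sqrt (2 * (x 0 ^ 2 + x 1 ^ 2)) ∧
    fFun x 5 = 0 ∧ fFun x 6 = 0 := by
  unfold fFun
  rw [if_neg h, max_eq_left (le_of_lt (lt_of_not_ge h))]
  exact ⟨rfl, rfl, rfl, rfl, rfl, rfl, rfl⟩

lemma gFun_pos (x : E 7) (h : 0 ≤ x 0) :
    gFun x 0 = Real.sqrt (2 * x 0 ^ 2 + 1) * x 3 ∧
    gFun x 1 = Real.sqrt (2 * x 0 ^ 2 + 1) * x 4 ∧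
    gFun x 2 = x 1 ∧ gFun x 3 = x 2 := by
  unfold gFun; rw [if_pos h]; exact ⟨rfl, rfl, rfl, rfl⟩

lemma gFun_neg (x : E 7) (h : ¬ (0 ≤ x 0)) :
    gFun x 0 = x 3 ∧ gFun x 1 = x 4 ∧
    gFun x 2 = Real.sqrt (2 * x 0 ^ 2 + 1) * x 1 ∧
    gFun x 3 = Real.sqrt (2 * x 0 ^ 2 + 1) * x 2 := by
  unfold gFun; rw [if_neg h]; exact ⟨rfl, rfl, rfl, rfl⟩

lemma fFun_mem (x : E 4) (hx : x ∈ Metric.sphere (0 : E 4) 1) :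
    fFun x ∈ SigmaSet := by
  rw [mem_sph, Fin.sum_univ_four] at hx
  by_cases h : x 0 ^ 2 + x 1 ^ 2 ≤ 1/2
  · obtain ⟨e0, e1, e2, e3, e4, e5, e6⟩ := fFun_left x h
    set D := Real.sqrt (2 * (1 - (x 0 ^ 2 + x 1 ^ 2))) with hD
    have hD2 : D ^ 2 = 2 * (1 - (x 0 ^ 2 + x 1 ^ 2)) := Real.sq_sqrt (by nlinarith)
    have hDpos : 0 < D := Real.sqrt_pos.mpr (by nlinarith)
    have hA : fFun x 0 ^ 2 = 1/2 - (x 0 ^ 2 + x 1 ^ 2) := by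
      rw [e0, neg_sq, Real.sq_sqrt (by nlinarith)]
    have h12 : fFun x 1 ^ 2 + fFun x 2 ^ 2 = 1/2 := by
      rw [e1, e2, div_pow, div_pow, ← add_div, hD2]
      rw [div_eq_iff (by nlinarith)]
      nlinarith
    have h34 : fFun x 3 ^ 2 + fFun x 4 ^ 2 = x 0 ^ 2 + x 1 ^ 2 := by
      rw [e3, e4]
    have hsph : fFun x ∈ Metric.sphere (0 : E 7) 1 := by
      rw [mem_sph, Fin.sum_univ_seven, e5, e6]
      nlinarith
    have hle : fFun x 0 ≤ 0 := by
      rw [e0]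
      simp [Real.sqrt_nonneg]
    rcases lt_or_eq_of_le hle with h0 | h0
    · refine Or.inr ⟨hsph, h0, ?_, h12⟩
      rw [e3, e4]
      linarith [hA]
    · refine Or.inl ⟨hsph, h0.ge, ?_, ?_⟩
      · rw [h0]
        nlinarith [h12]
      · have hz : x 0 ^ 2 + x 1 ^ 2 = 1/2 := by
          have hA' := hA
          rw [h0] at hA'
          nlinarith [hA']
        rw [e3, e4, hz]
  · obtain ⟨e0, e1, e2, e3, e4, e5, e6⟩ := fFun_right x h
    have hρ : 1/2 < x 0 ^ 2 + x 1 ^ 2 := lt_of_not_ge h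
    set C := Real.sqrt (2 * (x 0 ^ 2 + x 1 ^ 2)) with hC
    have hC2 : C ^ 2 = 2 * (x 0 ^ 2 + x 1 ^ 2) := Real.sq_sqrt (by nlinarith)
    have hCpos : 0 < C := Real.sqrt_pos.mpr (by nlinarith)
    have hA : fFun x 0 ^ 2 = x 0 ^ 2 + x 1 ^ 2 - 1/2 := by
      rw [e0, Real.sq_sqrt (by nlinarith)]
    have h34 : fFun x 3 ^ 2 + fFun x 4 ^ 2 = 1/2 := by
      rw [e3, e4, div_pow, div_pow, ← add_div, hC2]
      rw [div_eq_iff (by nlinarith)]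
      nlinarith
    have h12 : fFun x 1 ^ 2 + fFun x 2 ^ 2 = x 2 ^ 2 + x 3 ^ 2 := by
      rw [e1, e2]
    have hsph : fFun x ∈ Metric.sphere (0 : E 7) 1 := by
      rw [mem_sph, Fin.sum_univ_seven, e5, e6]
      nlinarith
    refine Or.inl ⟨hsph, by rw [e0]; exact Real.sqrt_nonneg _, ?_, h34⟩
    rw [e1, e2]
    nlinarith

lemma gFun_mem (x : E 7) (hx : x ∈ SigmaSet) :
    gFun x ∈ Metric.sphere (0 : E 4) 1 := by
  rcases hx with ⟨hs, h0, hc1, hc2⟩ | ⟨hs, h0, hc1, hc2⟩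
  · obtain ⟨e0, e1, e2, e3⟩ := gFun_pos x h0
    have hS2 : Real.sqrt (2 * x 0 ^ 2 + 1) ^ 2 = 2 * x 0 ^ 2 + 1 :=
      Real.sq_sqrt (by positivity)
    rw [mem_sph, Fin.sum_univ_four, e0, e1, e2, e3]
    nlinarith [hS2]
  · obtain ⟨e0, e1, e2, e3⟩ := gFun_neg x (not_le.mpr h0)
    have hS2 : Real.sqrt (2 * x 0 ^ 2 + 1) ^ 2 = 2 * x 0 ^ 2 + 1 :=
      Real.sq_sqrt (by positivity)
    rw [mem_sph, Fin.sum_univ_four, e0, e1, e2, e3]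
    nlinarith [hS2]

lemma gf (x : E 4) (hx : x ∈ Metric.sphere (0 : E 4) 1) :
    gFun (fFun x) = x := by
  rw [mem_sph, Fin.sum_univ_four] at hx
  rcases lt_trichotomy (x 0 ^ 2 + x 1 ^ 2) (1/2 : ℝ) with hρ | hρ | hρ
  · -- strictly inside: negative branch
    obtain ⟨e0, e1, e2, e3, e4, e5, e6⟩ := fFun_left x hρ.le
    set D := Real.sqrt (2 * (1 - (x 0 ^ 2 + x 1 ^ 2))) with hD
    have hD2 : D ^ 2 = 2 * (1 - (x 0 ^ 2 + x 1 ^ 2)) := Real.sq_sqrt (by nlinarith)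
    have hDpos : 0 < D := Real.sqrt_pos.mpr (by nlinarith)
    have h0neg : fFun x 0 < 0 := by
      rw [e0]
      have := Real.sqrt_pos.mpr (show (0:ℝ) < 1/2 - (x 0 ^ 2 + x 1 ^ 2) by nlinarith)
      linarith
    obtain ⟨g0, g1, g2, g3⟩ := gFun_neg (fFun x) (not_le.mpr h0neg)
    have hA : fFun x 0 ^ 2 = 1/2 - (x 0 ^ 2 + x 1 ^ 2) := by
      rw [e0, neg_sq, Real.sq_sqrt (by nlinarith)]
    have hSD : Real.sqrt (2 * fFun x 0 ^ 2 + 1) = D := by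
      rw [show 2 * fFun x 0 ^ 2 + 1 = D ^ 2 by rw [hA, hD2]; ring]
      exact Real.sqrt_sq hDpos.le
    ext i
    fin_cases i
    · show gFun (fFun x) 0 = x 0
      rw [g0, e3]
    · show gFun (fFun x) 1 = x 1
      rw [g1, e4]
    · show gFun (fFun x) 2 = x 2
      rw [g2, hSD, e1, mul_div_cancel₀ _ (ne_of_gt hDpos)]
    · show gFun (fFun x) 3 = x 3
      rw [g3, hSD, e2, mul_div_cancel₀ _ (ne_of_gt hDpos)]
  · -- boundary
    obtain ⟨e0, e1, e2, e3, e4, e5, e6⟩ := fFun_left x hρ.le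
    rw [hρ] at e0 e1 e2
    norm_num [Real.sqrt_one, Real.sqrt_zero] at e0 e1 e2
    obtain ⟨g0, g1, g2, g3⟩ := gFun_pos (fFun x) (by rw [e0])
    rw [e0] at g0 g1
    norm_num [Real.sqrt_one] at g0 g1
    ext i
    fin_cases i
    · show gFun (fFun x) 0 = x 0
      rw [g0, e3]
    · show gFun (fFun x) 1 = x 1
      rw [g1, e4]
    · show gFun (fFun x) 2 = x 2
      rw [g2, e1]
    · show gFun (fFun x) 3 = x 3
      rw [g3, e2]
  · -- outside: positive branch
    obtain ⟨e0, e1, e2, e3, e4, e5, e6⟩ := fFun_right x (not_le.mpr hρ)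
    set C := Real.sqrt (2 * (x 0 ^ 2 + x 1 ^ 2)) with hC
    have hC2 : C ^ 2 = 2 * (x 0 ^ 2 + x 1 ^ 2) := Real.sq_sqrt (by nlinarith)
    have hCpos : 0 < C := Real.sqrt_pos.mpr (by nlinarith)
    have h0pos : 0 ≤ fFun x 0 := by rw [e0]; exact Real.sqrt_nonneg _
    obtain ⟨g0, g1, g2, g3⟩ := gFun_pos (fFun x) h0pos
    have hA : fFun x 0 ^ 2 = x 0 ^ 2 + x 1 ^ 2 - 1/2 := by
      rw [e0, Real.sq_sqrt (by nlinarith)]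
    have hSC : Real.sqrt (2 * fFun x 0 ^ 2 + 1) = C := by
      rw [show 2 * fFun x 0 ^ 2 + 1 = C ^ 2 by rw [hA, hC2]; ring]
      exact Real.sqrt_sq hCpos.le
    ext i
    fin_cases i
    · show gFun (fFun x) 0 = x 0
      rw [g0, hSC, e3, mul_div_cancel₀ _ (ne_of_gt hCpos)]
    · show gFun (fFun x) 1 = x 1
      rw [g1, hSC, e4, mul_div_cancel₀ _ (ne_of_gt hCpos)]
    · show gFun (fFun x) 2 = x 2
      rw [g2, e1]
    · show gFun (fFun x) 3 = x 3
      rw [g3, e2]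

lemma fg (x : E 7) (hx : x ∈ SigmaSet) : fFun (gFun x) = x := by
  rcases hx with ⟨hs, h0, hc1, hc2⟩ | ⟨hs, h0, hc1, hc2⟩
  · -- piece 1 : 0 ≤ x 0
    rw [mem_sph, Fin.sum_univ_seven] at hs
    have h5sq : x 5 ^ 2 = 0 := by nlinarith [sq_nonneg (x 5), sq_nonneg (x 6)]
    have h6sq : x 6 ^ 2 = 0 := by nlinarith [sq_nonneg (x 5), sq_nonneg (x 6)]
    have h5 : x 5 = 0 := by
      have := sq_eq_zero_iff.mp h5sq; exact this
    have h6 : x 6 = 0 := by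
      have := sq_eq_zero_iff.mp h6sq; exact this
    obtain ⟨g0, g1, g2, g3⟩ := gFun_pos x h0
    set S := Real.sqrt (2 * x 0 ^ 2 + 1) with hS
    have hS2 : S ^ 2 = 2 * x 0 ^ 2 + 1 := Real.sq_sqrt (by positivity)
    have hSpos : 0 < S := Real.sqrt_pos.mpr (by positivity)
    have hρ' : gFun x 0 ^ 2 + gFun x 1 ^ 2 = x 0 ^ 2 + 1/2 := by
      rw [g0, g1, mul_pow, mul_pow, hS2]
      nlinarith
    rcases h0.lt_or_eq with h0pos | h0z
    · -- 0 < x 0 : fFun takes right branch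
      obtain ⟨e0, e1, e2, e3, e4, e5, e6⟩ :=
        fFun_right (gFun x) (by rw [hρ']; nlinarith)
      rw [hρ'] at e0 e3 e4
      have he0 : fFun (gFun x) 0 = x 0 := by
        rw [e0, show x 0 ^ 2 + 1/2 - 1/2 = x 0 ^ 2 by ring, Real.sqrt_sq h0]
      have hden : Real.sqrt (2 * (x 0 ^ 2 + 1/2)) = S := by
        rw [hS, show 2 * (x 0 ^ 2 + 1/2) = 2 * x 0 ^ 2 + 1 by ring]
      ext i
      fin_cases i
      · exact he0
      · show fFun (gFun x) 1 = x 1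
        rw [e1, g2]
      · show fFun (gFun x) 2 = x 2
        rw [e2, g3]
      · show fFun (gFun x) 3 = x 3
        rw [e3, hden, g0, mul_comm, mul_div_assoc, div_self (ne_of_gt hSpos), mul_one]
      · show fFun (gFun x) 4 = x 4
        rw [e4, hden, g1, mul_comm, mul_div_assoc, div_self (ne_of_gt hSpos), mul_one]
      · show fFun (gFun x) 5 = x 5
        rw [e5, h5]
      · show fFun (gFun x) 6 = x 6
        rw [e6, h6]
    · -- x 0 = 0 : fFun takes left branch
      have h0z' : x 0 = 0 := h0z.symm
      have hcond : gFun x 0 ^ 2 + gFun x 1 ^ 2 = 1/2 := by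
        rw [hρ', h0z']; ring
      obtain ⟨e0, e1, e2, e3, e4, e5, e6⟩ :=
        fFun_left (gFun x) (le_of_eq hcond)
      rw [hcond] at e0 e1 e2
      norm_num [Real.sqrt_zero, Real.sqrt_one] at e0 e1 e2
      have hS1 : S = 1 := by
        rw [hS, h0z']; norm_num [Real.sqrt_one]
      ext i
      fin_cases i
      · show fFun (gFun x) 0 = x 0
        rw [e0, h0z']
      · show fFun (gFun x) 1 = x 1
        rw [e1, g2]
      · show fFun (gFun x) 2 = x 2
        rw [e2, g3]
      · show fFun (gFun x) 3 = x 3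
        rw [e3, g0, hS1, one_mul]
      · show fFun (gFun x) 4 = x 4
        rw [e4, g1, hS1, one_mul]
      · show fFun (gFun x) 5 = x 5
        rw [e5, h5]
      · show fFun (gFun x) 6 = x 6
        rw [e6, h6]
  · -- piece 2 : x 0 < 0
    rw [mem_sph, Fin.sum_univ_seven] at hs
    have h5sq : x 5 ^ 2 = 0 := by nlinarith [sq_nonneg (x 5), sq_nonneg (x 6)]
    have h6sq : x 6 ^ 2 = 0 := by nlinarith [sq_nonneg (x 5), sq_nonneg (x 6)]
    have h5 : x 5 = 0 := sq_eq_zero_iff.mp h5sq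
    have h6 : x 6 = 0 := sq_eq_zero_iff.mp h6sq
    obtain ⟨g0, g1, g2, g3⟩ := gFun_neg x (not_le.mpr h0)
    set S := Real.sqrt (2 * x 0 ^ 2 + 1) with hS
    have hS2 : S ^ 2 = 2 * x 0 ^ 2 + 1 := Real.sq_sqrt (by positivity)
    have hSpos : 0 < S := Real.sqrt_pos.mpr (by positivity)
    have h0sq : 0 < x 0 ^ 2 := by nlinarith
    have hρ' : gFun x 0 ^ 2 + gFun x 1 ^ 2 = 1/2 - x 0 ^ 2 := by
      rw [g0, g1]; linarith
    obtain ⟨e0, e1, e2, e3, e4, e5, e6⟩ :=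
      fFun_left (gFun x) (by rw [hρ']; nlinarith)
    rw [hρ'] at e0 e1 e2
    have he0 : fFun (gFun x) 0 = x 0 := by
      rw [e0, show 1/2 - (1/2 - x 0 ^ 2) = x 0 ^ 2 by ring, Real.sqrt_sq_eq_abs,
        abs_of_neg h0]
      ring
    have hden : Real.sqrt (2 * (1 - (1/2 - x 0 ^ 2))) = S := by
      rw [hS, show 2 * (1 - (1/2 - x 0 ^ 2)) = 2 * x 0 ^ 2 + 1 by ring]
    ext i
    fin_cases i
    · exact he0
    · show fFun (gFun x) 1 = x 1
      rw [e1, hden, g2, mul_comm, mul_div_assoc, div_self (ne_of_gt hSpos), mul_one]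
    · show fFun (gFun x) 2 = x 2
      rw [e2, hden, g3, mul_comm, mul_div_assoc, div_self (ne_of_gt hSpos), mul_one]
    · show fFun (gFun x) 3 = x 3
      rw [e3, g0]
    · show fFun (gFun x) 4 = x 4
      rw [e4, g1]
    · show fFun (gFun x) 5 = x 5
      rw [e5, h5]
    · show fFun (gFun x) 6 = x 6
      rw [e6, h6]

/-- The equivalence `Σ ≃ S³`. -/
def theEquiv : SigmaSet ≃ (Metric.sphere (0 : E 4) 1) where
  toFun x := ⟨gFun x, gFun_mem x x.2⟩
  invFun y := ⟨fFun y, fFun_mem y y.2⟩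
  left_inv x := Subtype.ext (fg x x.2)
  right_inv y := Subtype.ext (gf y y.2)

end Stmt3

theorem statement3 :
    Nonempty (SigmaSet ≃ₜ (Metric.sphere (0 : E 4) 1)) := by
  refine ⟨{ Stmt3.theEquiv with
    continuous_toFun := ?_
    continuous_invFun := ?_ }⟩
  · exact Continuous.subtype_mk (Stmt3.gFun_continuous.comp continuous_subtype_val) _
  · exact Continuous.subtype_mk (Stmt3.fFun_continuous.comp continuous_subtype_val) _
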